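/- For any n ≥ 1, any K₁, …, Kₙ > 0 and any nonnegative integer k, the iterated integral ∫_0^∞ ∫_{(0,∞)^{n-1}} exp(-Σ_{i=1}^n (B_i + K_i/B_i)) l^k ∏_{i=1}^{n-1}(dB_i/B_i) dl is finite, where B_n := e^{-l/2}√(K₁⋯K_n)/(B₁⋯B_{n-1}). -/

import Mathlib

open MeasureTheory Real

/-- The last variable `Bₙ` determined by `B₁⋯Bₙ = e^{-l/2}·√(K₁⋯Kₙ)`. -/
noncomputable def lastB (m : ℕ) (K : Fin (m + 1) → ℝ) (l : ℝ) (B : Fin m → ℝ) : ℝ :=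
  Real.exp (-l / 2) * Real.sqrt (∏ i, K i) / ∏ i, B i

lemma exp_neg_le_inv {x : ℝ} (hx : 0 < x) : Real.exp (-x) ≤ x⁻¹ := by
  rw [Real.exp_neg]
  exact inv_anti₀ hx (by linarith [Real.add_one_le_exp x])

lemma exp_neg_le_quad {x : ℝ} (hx : 0 < x) : Real.exp (-x) ≤ 4 / x ^ 2 := by
  have h1 : x / 2 + 1 ≤ Real.exp (x / 2) := Real.add_one_le_exp _
  have h2 : Real.exp (x / 2) * Real.exp (x / 2) = Real.exp x := by
    rw [← Real.exp_add]; ring_nf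
  have h3 : x ^ 2 / 4 ≤ Real.exp x := by nlinarith [Real.exp_pos (x / 2)]
  rw [Real.exp_neg]
  calc (Real.exp x)⁻¹ ≤ (x ^ 2 / 4)⁻¹ := inv_anti₀ (by positivity) h3
    _ = 4 / x ^ 2 := by rw [inv_div]

lemma integrable_exp_neg_abs : Integrable (fun x : ℝ => Real.exp (-|x|)) := by
  have h : (Set.univ : Set ℝ) = Set.Iic 0 ∪ Set.Ioi 0 := (Set.Iic_union_Ioi).symm
  rw [← integrableOn_univ, h]
  apply IntegrableOn.union
  · exact (integrableOn_exp_Iic 0).congr_fun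
      (fun x hx => by rw [abs_of_nonpos hx, neg_neg]) measurableSet_Iic
  · exact (exp_neg_integrableOn_Ioi 0 one_pos).congr_fun
      (fun x hx => by beta_reduce; rw [abs_of_pos hx, neg_mul, one_mul]) measurableSet_Ioi

set_option maxHeartbeats 1000000 in
lemma pointwise_bound (m : ℕ) (K : Fin (m + 1) → ℝ) (hK : ∀ i, 0 < K i) (k : ℕ)
    (B : Fin m → ℝ) (hB : ∀ i, 0 < B i) (l : ℝ) (hl : 0 < l) :
    Real.exp (-((∑ i : Fin m, (B i + K i.castSucc / B i)) +
        (lastB m K l B + K (Fin.last m) / lastB m K l B))) * l ^ k * ∏ i, (B i)⁻¹ ≤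
      (∏ i, Real.exp (-|B i|)) *
        ((Real.sqrt (∏ i, K i) / K (Fin.last m) * ∏ i : Fin m, 4 / K i.castSucc ^ 2) *
          (l ^ k * Real.exp (-l / 2))) := by
  set L := lastB m K l B with hLdef
  set Kn := K (Fin.last m) with hKndef
  have hPK : 0 < ∏ i, K i := Finset.prod_pos fun i _ => hK i
  have hsq : 0 < Real.sqrt (∏ i, K i) := Real.sqrt_pos.2 hPK
  have hprodB : 0 < ∏ i, B i := Finset.prod_pos fun i _ => hB i
  have hL : 0 < L := by rw [hLdef]; unfold lastB; positivity
  have hKn : 0 < Kn := hK _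
  have hprodBinv : 0 < ∏ i, (B i)⁻¹ := Finset.prod_pos fun i _ => inv_pos.2 (hB i)
  have e1 : Real.exp (-((∑ i : Fin m, (B i + K i.castSucc / B i)) + (L + Kn / L))) =
      Real.exp (-(∑ i : Fin m, (B i + K i.castSucc / B i))) *
        (Real.exp (-L) * Real.exp (-(Kn / L))) := by
    rw [← Real.exp_add, ← Real.exp_add]; congr 1; ring
  have e2 : Real.exp (-L) ≤ 1 := Real.exp_le_one_iff.2 (by linarith)
  have e3 : Real.exp (-(Kn / L)) ≤ L / Kn := by
    calc Real.exp (-(Kn / L)) ≤ (Kn / L)⁻¹ := exp_neg_le_inv (div_pos hKn hL)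
      _ = L / Kn := inv_div _ _
  have e4 : Real.exp (-(∑ i : Fin m, (B i + K i.castSucc / B i))) ≤
      ∏ i, Real.exp (-|B i|) * (4 * B i ^ 2 / K i.castSucc ^ 2) := by
    have hsum : -(∑ i : Fin m, (B i + K i.castSucc / B i)) =
        ∑ i : Fin m, (-(B i) + -(K i.castSucc / B i)) := by
      rw [← Finset.sum_neg_distrib]
      exact Finset.sum_congr rfl fun i _ => by ring
    rw [hsum, Real.exp_sum]
    refine Finset.prod_le_prod (fun i _ => (Real.exp_pos _).le) fun i _ => ?_
    rw [Real.exp_add, abs_of_pos (hB i)]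
    refine mul_le_mul_of_nonneg_left ?_ (Real.exp_pos _).le
    calc Real.exp (-(K i.castSucc / B i)) ≤ 4 / (K i.castSucc / B i) ^ 2 :=
        exp_neg_le_quad (div_pos (hK _) (hB i))
      _ = 4 * B i ^ 2 / K i.castSucc ^ 2 := by
        rw [div_pow, div_div_eq_mul_div]
  calc Real.exp (-((∑ i : Fin m, (B i + K i.castSucc / B i)) + (L + Kn / L))) * l ^ k *
        ∏ i, (B i)⁻¹
      = Real.exp (-(∑ i : Fin m, (B i + K i.castSucc / B i))) *
          (Real.exp (-L) * Real.exp (-(Kn / L))) * l ^ k * ∏ i, (B i)⁻¹ := by rw [e1]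
    _ ≤ (∏ i, Real.exp (-|B i|) * (4 * B i ^ 2 / K i.castSucc ^ 2)) * (1 * (L / Kn)) * l ^ k *
          ∏ i, (B i)⁻¹ := by
        refine mul_le_mul_of_nonneg_right (mul_le_mul_of_nonneg_right ?_
          (pow_nonneg hl.le k)) hprodBinv.le
        exact mul_le_mul e4 (mul_le_mul e2 e3 (Real.exp_pos _).le zero_le_one)
          (by positivity) (Finset.prod_nonneg fun i _ => by positivity)
    _ = (∏ i, Real.exp (-|B i|)) *
          ((Real.sqrt (∏ i, K i) / Kn * ∏ i : Fin m, 4 / K i.castSucc ^ 2) *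
            (l ^ k * Real.exp (-l / 2))) := by
        rw [Finset.prod_mul_distrib, hLdef]
        unfold lastB
        have hquot : (∏ i, (4 * B i ^ 2 / K i.castSucc ^ 2)) * (∏ i, (B i)⁻¹) *
            (∏ i, B i)⁻¹ = ∏ i : Fin m, 4 / K i.castSucc ^ 2 := by
          rw [← Finset.prod_inv_distrib, ← Finset.prod_mul_distrib, ← Finset.prod_mul_distrib]
          refine Finset.prod_congr rfl fun i _ => ?_
          have := (hB i).ne'
          have := (hK i.castSucc).ne'
          field_simp
        linear_combination ((∏ i, Real.exp (-|B i|)) * Real.exp (-l / 2) *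
          Real.sqrt (∏ i, K i) * l ^ k / Kn) * hquot

theorem expVolume_moments_finite (m : ℕ) (K : Fin (m + 1) → ℝ) (hK : ∀ i, 0 < K i)
    (k : ℕ) :
    IntegrableOn
      (fun p : (Fin m → ℝ) × ℝ =>
        Real.exp (-((∑ i : Fin m, (p.1 i + K i.castSucc / p.1 i)) +
          (lastB m K p.2 p.1 + K (Fin.last m) / lastB m K p.2 p.1))) *
          p.2 ^ k * ∏ i, (p.1 i)⁻¹)
      ((Set.univ.pi fun _ : Fin m => Set.Ioi (0 : ℝ)) ×ˢ Set.Ioi (0 : ℝ)) := by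
  set C := Real.sqrt (∏ i, K i) / K (Fin.last m) * ∏ i : Fin m, 4 / K i.castSucc ^ 2 with hC
  have hf : Integrable (fun B : Fin m → ℝ => ∏ i, Real.exp (-|B i|)) :=
    Integrable.fintype_prod fun _ => integrable_exp_neg_abs
  have hg : IntegrableOn (fun x : ℝ => C * (x ^ k * Real.exp (-x / 2))) (Set.Ioi 0) := by
    have h0 : IntegrableOn (fun x : ℝ => x ^ (k : ℝ) * Real.exp (-(2⁻¹ : ℝ) * x ^ (1 : ℝ)))
        (Set.Ioi 0) :=
      integrableOn_rpow_mul_exp_neg_mul_rpow (lt_of_lt_of_le neg_one_lt_zero (Nat.cast_nonneg k)) one_pos (by norm_num)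
    have h1 : IntegrableOn (fun x : ℝ => x ^ k * Real.exp (-x / 2)) (Set.Ioi 0) := by
      refine h0.congr_fun (fun x _ => ?_) measurableSet_Ioi
      beta_reduce
      rw [Real.rpow_natCast, Real.rpow_one]
      ring_nf
    exact h1.const_mul C
  have hprod : Integrable
      (fun p : (Fin m → ℝ) × ℝ =>
        (∏ i, Real.exp (-|p.1 i|)) * (C * (p.2 ^ k * Real.exp (-p.2 / 2))))
      ((volume.restrict (Set.univ.pi fun _ : Fin m => Set.Ioi (0 : ℝ))).prod
        (volume.restrict (Set.Ioi 0))) :=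
    (hf.restrict).mul_prod hg
  rw [IntegrableOn, Measure.volume_eq_prod, ← Measure.prod_restrict]
  refine hprod.mono' ?_ ?_
  · apply Measurable.aestronglyMeasurable
    unfold lastB
    fun_prop
  · rw [Measure.prod_restrict]
    filter_upwards [ae_restrict_mem ((MeasurableSet.univ_pi
      fun _ => measurableSet_Ioi).prod measurableSet_Ioi)] with p hp
    obtain ⟨hp1, hp2⟩ := hp
    have hB : ∀ i, 0 < p.1 i := fun i => hp1 i (Set.mem_univ i)
    have hl : 0 < p.2 := hp2
    have hpos : 0 < Real.exp (-((∑ i : Fin m, (p.1 i + K i.castSucc / p.1 i)) +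
        (lastB m K p.2 p.1 + K (Fin.last m) / lastB m K p.2 p.1))) *
        p.2 ^ k * ∏ i, (p.1 i)⁻¹ := by
      have : 0 < ∏ i, (p.1 i)⁻¹ := Finset.prod_pos fun i _ => inv_pos.2 (hB i)
      positivity
    rw [Real.norm_eq_abs, abs_of_pos hpos]
    exact pointwise_bound m K hK k p.1 hB p.2 hl
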